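/- arXiv:1711.00184 — 7 statements merged into one kernel-verified Lean document; each statement's English description precedes it below -/
import Mathlib

section
/- For any positive integer m, the set of positive integers n such that m divides v_n has natural (asymptotic) density one; that is, (1/x)·#{n ≤ x : m divides v_n} tends to 1 as x → ∞. -/
open Finset Filter

namespace DensityHarm

variable {p : ℕ} [hp : Fact p.Prime]


variable {p : ℕ} [hp : Fact p.Prime]

lemma den_dvd_iff {a : ℕ} (ha : 1 ≤ a) (q : ℚ) :
    p ^ a ∣ q.den ↔ padicValRat p q ≤ -(a : ℤ) := by
  rcases eq_or_ne q 0 with rfl | hq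
  · simp only [Rat.den_zero, Nat.dvd_one, padicValRat.zero]
    constructor
    · intro h
      exact absurd ((pow_eq_one_iff.1 h).resolve_right (by omega)) hp.out.ne_one
    · intro h; omega
  · have hden : q.den ≠ 0 := q.den_nz
    constructor
    · intro hdvd
      have hp1 : p ∣ q.den := dvd_trans (dvd_pow_self p (by omega)) hdvd
      have hnum : ¬ p ∣ q.num.natAbs := by
        intro hc
        have h1 : p ∣ 1 := q.reduced ▸ Nat.dvd_gcd hc hp1
        exact hp.out.ne_one (Nat.dvd_one.mp h1)
      have h1 : padicValInt p q.num = 0 := by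
        simp [padicValInt, padicValNat.eq_zero_of_not_dvd hnum]
      have h2 : a ≤ padicValNat p q.den := (padicValNat_dvd_iff_le hden).1 hdvd
      rw [padicValRat_def, h1]
      omega
    · intro h
      rw [padicValRat_def] at h
      have h0 : (0:ℤ) ≤ padicValInt p q.num := Int.ofNat_nonneg _
      exact (padicValNat_dvd_iff_le hden).2 (by omega)

/-- the "prime-to-p" part of the harmonic sum -/
def S (p n : ℕ) : ℚ :=
  ∑ i ∈ (Finset.Icc 1 n).filter (fun i => ¬ p ∣ i), (i:ℚ)⁻¹

lemma harmonic_split (n : ℕ) :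
    harmonic n = (p:ℚ)⁻¹ * harmonic (n / p) + S p n := by
  classical
  rw [harmonic_eq_sum_Icc, ← Finset.sum_filter_add_sum_filter_not (Finset.Icc 1 n) (fun i => p ∣ i)]
  have himg : (Finset.Icc 1 n).filter (fun i => p ∣ i)
      = (Finset.Icc 1 (n / p)).image (fun j => p * j) := by
    ext i
    simp only [mem_filter, mem_Icc, mem_image]
    constructor
    · rintro ⟨⟨h1, h2⟩, k, rfl⟩
      refine ⟨k, ⟨?_, ?_⟩, rfl⟩
      · rcases Nat.eq_zero_or_pos k with rfl | hk
        · simp at h1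
        · exact hk
      · rw [Nat.le_div_iff_mul_le hp.out.pos, mul_comm]; omega
    · rintro ⟨j, ⟨hj1, hj2⟩, rfl⟩
      rw [Nat.le_div_iff_mul_le hp.out.pos] at hj2
      refine ⟨⟨Nat.one_le_iff_ne_zero.2 (Nat.mul_ne_zero hp.out.pos.ne' (by omega)), ?_⟩, j, rfl⟩
      rw [mul_comm]; omega
  have hcongr : ∑ i ∈ (Finset.Icc 1 n).filter (fun i => p ∣ i), (i:ℚ)⁻¹
      = (p:ℚ)⁻¹ * harmonic (n / p) := by
    rw [himg, Finset.sum_image (by intro a _ b _ h; exact Nat.eq_of_mul_eq_mul_left hp.out.pos h),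
      harmonic_eq_sum_Icc, Finset.mul_sum]
    apply Finset.sum_congr rfl
    intro j hj
    push_cast
    rw [mul_inv]
  rw [hcongr]
  rfl

lemma val_inv_nat {i : ℕ} (hi : ¬ p ∣ i) : padicValRat p ((i:ℚ)⁻¹) = 0 := by
  rcases eq_or_ne i 0 with rfl | h0
  · simp
  · rw [padicValRat.inv, padicValRat.of_nat, padicValNat.eq_zero_of_not_dvd hi]
    simp

lemma val_sum_nonneg {s : Finset ℕ} {F : ℕ → ℚ}
    (h : ∀ i ∈ s, F i ≠ 0 → 0 ≤ padicValRat p (F i)) (hs : ∑ i ∈ s, F i ≠ 0) :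
    0 ≤ padicValRat p (∑ i ∈ s, F i) := by
  classical
  induction s using Finset.induction_on with
  | empty => simp at hs
  | @insert a s ha ih =>
    rw [Finset.sum_insert ha] at hs ⊢
    by_cases h2 : ∑ i ∈ s, F i = 0
    · rw [h2, add_zero] at hs ⊢
      exact h a (Finset.mem_insert_self a s) hs
    · by_cases h1 : F a = 0
      · rw [h1, zero_add] at hs ⊢
        exact ih (fun i hi hne => h i (Finset.mem_insert_of_mem hi) hne) h2
      · refine le_trans (le_min (h a (Finset.mem_insert_self a s) h1)
          (ih (fun i hi hne => h i (Finset.mem_insert_of_mem hi) hne) h2))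
          (padicValRat.min_le_padicValRat_add hs)

lemma S_val_nonneg (n : ℕ) (h : S p n ≠ 0) : 0 ≤ padicValRat p (S p n) := by
  classical
  refine val_sum_nonneg (fun i hi hne => ?_) h
  rw [Finset.mem_filter] at hi
  rw [val_inv_nat hi.2]

lemma parent {n : ℕ} (hn : p ≤ n) (h : 0 ≤ padicValRat p (harmonic n)) :
    1 ≤ padicValRat p (harmonic (n / p)) := by
  have hq : n / p ≠ 0 := by
    have := Nat.one_le_div_iff hp.out.pos |>.2 hn
    omega
  have hH' : harmonic (n / p) ≠ 0 := (harmonic_pos hq).ne'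
  have hT : ((p:ℚ)⁻¹ * harmonic (n / p)) ≠ 0 := by
    have : (p:ℚ) ≠ 0 := Nat.cast_ne_zero.2 hp.out.pos.ne'
    exact mul_ne_zero (inv_ne_zero this) hH'
  have hvT : padicValRat p ((p:ℚ)⁻¹ * harmonic (n / p)) = -1 + padicValRat p (harmonic (n / p)) := by
    rw [padicValRat.mul (inv_ne_zero (Nat.cast_ne_zero.2 hp.out.pos.ne')) hH',
      padicValRat.inv, padicValRat.self hp.out.one_lt]
  have key : 0 ≤ padicValRat p ((p:ℚ)⁻¹ * harmonic (n / p)) := by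
    have hsplit := harmonic_split (p := p) n
    by_cases hS : S p n = 0
    · rw [hS, add_zero] at hsplit
      rw [← hsplit]; exact h
    · have heq : (p:ℚ)⁻¹ * harmonic (n / p) = harmonic n + (- S p n) := by
        rw [hsplit]; ring
      rw [heq]
      have hne : harmonic n + (- S p n) ≠ 0 := heq ▸ hT
      refine le_trans (le_min h ?_) (padicValRat.min_le_padicValRat_add hne)
      rw [padicValRat.neg]
      exact S_val_nonneg n hS
  rw [hvT] at key
  omega

lemma descent {n : ℕ} (hn : p ≤ n) {c : ℤ}
    (h : padicValRat p (harmonic (n / p)) ≤ -c) (hc : 1 ≤ c) :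
    padicValRat p (harmonic n) ≤ -(c + 1) := by
  have hq : n / p ≠ 0 := by
    have := Nat.one_le_div_iff hp.out.pos |>.2 hn
    omega
  have hH' : harmonic (n / p) ≠ 0 := (harmonic_pos hq).ne'
  have hpne : (p:ℚ) ≠ 0 := Nat.cast_ne_zero.2 hp.out.pos.ne'
  have hT : ((p:ℚ)⁻¹ * harmonic (n / p)) ≠ 0 := mul_ne_zero (inv_ne_zero hpne) hH'
  have hvT : padicValRat p ((p:ℚ)⁻¹ * harmonic (n / p)) = -1 + padicValRat p (harmonic (n / p)) := by
    rw [padicValRat.mul (inv_ne_zero hpne) hH', padicValRat.inv, padicValRat.self hp.out.one_lt]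
  have hsplit := harmonic_split (p := p) n
  by_cases hS : S p n = 0
  · rw [hS, add_zero] at hsplit
    rw [hsplit, hvT]; omega
  · have hne : (p:ℚ)⁻¹ * harmonic (n / p) + S p n ≠ 0 := by
      rw [← hsplit]
      exact (harmonic_pos (by have := hp.out.pos; omega : n ≠ 0)).ne'
    have hlt : padicValRat p ((p:ℚ)⁻¹ * harmonic (n / p)) < padicValRat p (S p n) := by
      rw [hvT]
      have := S_val_nonneg (p := p) n hS
      omega
    rw [hsplit, padicValRat.add_eq_of_lt hne hT hS hlt, hvT]
    omega

lemma nonadjacent {n : ℕ} (h1 : 1 ≤ padicValRat p (harmonic n))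
    (h2 : 1 ≤ padicValRat p (harmonic (n + 1))) (h3 : ¬ p ∣ (n + 1)) : False := by
  rcases eq_or_ne n 0 with rfl | hn
  · simp [padicValRat.zero] at h1
  · have hv : padicValRat p ((((n:ℕ) + 1 : ℕ) : ℚ)⁻¹) = 0 := val_inv_nat h3
    have heq : (((n + 1 : ℕ)) : ℚ)⁻¹ = harmonic (n + 1) + (- harmonic n) := by
      rw [harmonic_succ]; push_cast; ring
    have hne : harmonic (n + 1) + (- harmonic n) ≠ 0 := by
      rw [← heq]
      positivity
    have hmin := padicValRat.min_le_padicValRat_add (p := p) hne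
    rw [← heq, hv, padicValRat.neg] at hmin
    omega





lemma descend_iter (a : ℕ) : ∀ n : ℕ, p ^ a ≤ n →
    padicValRat p (harmonic (n / p ^ a)) ≤ -1 →
    padicValRat p (harmonic n) ≤ -(1 + a : ℤ) := by
  induction a with
  | zero => intro n _ h1; simpa using h1
  | succ a ih =>
    intro n hn h1
    have hp2 := hp.out.two_le
    have hpa : p ^ a ≤ n / p := by
      rw [Nat.le_div_iff_mul_le hp.out.pos, mul_comm, ← pow_succ']
      exact hn
    have hstep : (n / p) / p ^ a = n / p ^ (a + 1) := by
      rw [Nat.div_div_eq_div_mul, ← pow_succ']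
    have hrec := ih (n / p) hpa (by rw [hstep]; exact h1)
    have hpn : p ≤ n := le_trans (Nat.le_self_pow (Nat.succ_ne_zero a) p) hn
    have := descent hpn (c := 1 + a) hrec (by omega)
    have goal : -((1:ℤ) + a + 1) = -(1 + (a + 1 : ℕ)) := by push_cast; ring
    rw [← goal]
    exact this

lemma bad_struct {a n : ℕ} (ha : 1 ≤ a) (hn : p ^ a ≤ n)
    (hbad : ¬ padicValRat p (harmonic n) ≤ -(a : ℤ)) :
    1 ≤ padicValRat p (harmonic (n / p ^ a)) := by
  have hp2 := hp.out.two_le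
  by_cases h : padicValRat p (harmonic (n / p ^ (a - 1))) ≤ -1
  · have h1 : p ^ (a - 1) ≤ n :=
      le_trans (Nat.pow_le_pow_right hp.out.pos (by omega)) hn
    have h2 := descend_iter (a - 1) n h1 h
    exact absurd (le_trans h2 (by omega)) hbad
  · push_neg at h
    have h0 : 0 ≤ padicValRat p (harmonic (n / p ^ (a - 1))) := by omega
    have hpow : p ^ (a - 1) * p = p ^ a := by
      rw [← pow_succ]; congr 1; omega
    have hpt : p ≤ n / p ^ (a - 1) := by
      rw [Nat.le_div_iff_mul_le (pow_pos hp.out.pos _), mul_comm, hpow]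
      exact hn
    have := parent hpt h0
    rwa [Nat.div_div_eq_div_mul, hpow] at this

lemma fiber_card (b : ℕ) (T : Finset ℕ)
    (hT : ∀ n ∈ T, n / p = b ∧ 1 ≤ padicValRat p (harmonic n)) :
    T.card ≤ (p + 1) / 2 := by
  classical
  have hp2 := hp.out.two_le
  have hadj : ∀ n, n ∈ T → n + 1 ∈ T → False := by
    intro n hnT hsT
    obtain ⟨hb1, hv1⟩ := hT n hnT
    obtain ⟨hb2, hv2⟩ := hT _ hsT
    by_cases hdvd : p ∣ n + 1
    · have h1 : p * ((n + 1) / p) = n + 1 := Nat.mul_div_cancel' hdvd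
      have h2 : p * (n / p) ≤ n := Nat.mul_div_le n p
      rw [hb1] at h2; rw [hb2] at h1
      omega
    · exact nonadjacent hv1 hv2 hdvd
  have hbound : ∀ n ∈ T, p * b ≤ n ∧ n < p * b + p := by
    intro n hnT
    obtain ⟨hb1, -⟩ := hT n hnT
    have h2 : p * (n / p) ≤ n := Nat.mul_div_le n p
    have h3 : p * (n / p) + n % p = n := Nat.div_add_mod n p
    have h4 : n % p < p := Nat.mod_lt n hp.out.pos
    rw [hb1] at h2 h3
    omega
  have hmaps : ∀ n ∈ T, (n - p * b) / 2 ∈ Finset.range ((p + 1) / 2) := by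
    intro n hnT
    obtain ⟨l, r⟩ := hbound n hnT
    refine Finset.mem_range.2 ?_
    omega
  have hinj : Set.InjOn (fun n => (n - p * b) / 2) T := by
    intro n hnT m hmT heq
    have heq' : (n - p * b) / 2 = (m - p * b) / 2 := heq
    obtain ⟨ln, rn⟩ := hbound n hnT
    obtain ⟨lm, rm⟩ := hbound m hmT
    rcases lt_trichotomy n m with h | h | h
    · have hm1 : m = n + 1 := by omega
      exact absurd (hm1 ▸ hmT) (fun hc => hadj n hnT hc)
    · exact h
    · have hn1 : n = m + 1 := by omega
      exact absurd (hn1 ▸ hnT) (fun hc => hadj m hmT hc)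
  have := Finset.card_le_card_of_injOn (t := Finset.range ((p + 1) / 2))
    (fun n => (n - p * b) / 2) hmaps hinj
  simpa using this

lemma gcount (k : ℕ) :
    ((Finset.range (p ^ k)).filter (fun n => 1 ≤ padicValRat p (harmonic n))).card
      ≤ k * ((p + 1) / 2) ^ k := by
  classical
  have hp2 := hp.out.two_le
  induction k with
  | zero =>
    have hempty : (Finset.range (p ^ 0)).filter (fun n => 1 ≤ padicValRat p (harmonic n)) = ∅ := by
      rw [pow_zero, Finset.range_one]
      ext n
      simp only [Finset.mem_filter, Finset.mem_singleton, Finset.notMem_empty, iff_false, not_and]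
      rintro rfl
      simp
    rw [hempty]
    simp
  | succ k ih =>
    set t : Finset ℕ :=
      insert 0 ((Finset.range (p ^ k)).filter (fun n => 1 ≤ padicValRat p (harmonic n))) with ht
    have hmaps : ∀ n ∈ (Finset.range (p ^ (k + 1))).filter
        (fun n => 1 ≤ padicValRat p (harmonic n)), n / p ∈ t := by
      intro n hn
      rw [Finset.mem_filter, Finset.mem_range] at hn
      obtain ⟨hlt, hPn⟩ := hn
      rcases Nat.eq_zero_or_pos (n / p) with h0 | hpos
      · rw [h0]; exact Finset.mem_insert_self 0 _
      · refine Finset.mem_insert_of_mem ?_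
        rw [Finset.mem_filter, Finset.mem_range]
        constructor
        · rw [Nat.div_lt_iff_lt_mul hp.out.pos, mul_comm, ← pow_succ']
          exact hlt
        · have hpn : p ≤ n := (Nat.one_le_div_iff hp.out.pos).1 hpos
          exact parent hpn (le_trans (by omega) hPn)
    have hfib : ∀ b ∈ t,
        (((Finset.range (p ^ (k + 1))).filter
          (fun n => 1 ≤ padicValRat p (harmonic n))).filter (fun n => n / p = b)).card
          ≤ (p + 1) / 2 := by
      intro b _
      apply fiber_card b
      intro n hn
      rw [Finset.mem_filter, Finset.mem_filter] at hn
      exact ⟨hn.2, hn.1.2⟩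
    have hcard := Finset.card_le_mul_card_image_of_maps_to hmaps ((p + 1) / 2) hfib
    have htcard : t.card ≤ k * ((p + 1) / 2) ^ k + 1 := by
      refine le_trans (Finset.card_insert_le _ _) ?_
      omega
    calc ((Finset.range (p ^ (k + 1))).filter (fun n => 1 ≤ padicValRat p (harmonic n))).card
        ≤ ((p + 1) / 2) * t.card := hcard
      _ ≤ ((p + 1) / 2) * (k * ((p + 1) / 2) ^ k + 1) := Nat.mul_le_mul_left _ htcard
      _ ≤ (k + 1) * ((p + 1) / 2) ^ (k + 1) := by
          have h1 : (p + 1) / 2 ≤ ((p + 1) / 2) ^ (k + 1) := Nat.le_self_pow (Nat.succ_ne_zero k) _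
          calc ((p + 1) / 2) * (k * ((p + 1) / 2) ^ k + 1)
              = k * ((p + 1) / 2) ^ (k + 1) + (p + 1) / 2 := by ring
            _ ≤ k * ((p + 1) / 2) ^ (k + 1) + ((p + 1) / 2) ^ (k + 1) := by omega
            _ = (k + 1) * ((p + 1) / 2) ^ (k + 1) := by ring

lemma bad_count (a N : ℕ) (ha : 1 ≤ a) :
    (((Finset.Icc 1 N).filter (fun n => ¬ padicValRat p (harmonic n) ≤ -(a : ℤ))).card)
      ≤ p ^ a + p ^ a * ((Nat.log p N + 1) * ((p + 1) / 2) ^ (Nat.log p N + 1)) := by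
  classical
  have hp2 := hp.out.two_le
  set Bad := (Finset.Icc 1 N).filter (fun n => ¬ padicValRat p (harmonic n) ≤ -(a : ℤ)) with hBad
  have hsplit := Finset.card_filter_add_card_filter_not
    (s := Bad) (p := fun n => n < p ^ a)
  have h1 : (Bad.filter (fun n => n < p ^ a)).card ≤ p ^ a := by
    refine le_trans (Finset.card_le_card (t := Finset.range (p ^ a)) ?_) (by simp)
    intro n hn
    rw [Finset.mem_filter] at hn
    exact Finset.mem_range.2 hn.2
  set L := Nat.log p N with hL
  have h2 : (Bad.filter (fun n => ¬ n < p ^ a)).card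
      ≤ p ^ a * ((L + 1) * ((p + 1) / 2) ^ (L + 1)) := by
    have hmaps : ∀ n ∈ Bad.filter (fun n => ¬ n < p ^ a),
        n / p ^ a ∈ (Finset.range (p ^ (L + 1))).filter
          (fun n => 1 ≤ padicValRat p (harmonic n)) := by
      intro n hn
      rw [Finset.mem_filter] at hn
      obtain ⟨hnB, hge⟩ := hn
      rw [hBad, Finset.mem_filter, Finset.mem_Icc] at hnB
      obtain ⟨⟨hn1, hnN⟩, hbad⟩ := hnB
      rw [Finset.mem_filter, Finset.mem_range]
      constructor
      · calc n / p ^ a ≤ n := Nat.div_le_self n _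
          _ ≤ N := hnN
          _ < p ^ (L + 1) := Nat.lt_pow_succ_log_self hp.out.one_lt N
      · exact bad_struct ha (by omega) hbad
    have hfib : ∀ b ∈ (Finset.range (p ^ (L + 1))).filter
        (fun n => 1 ≤ padicValRat p (harmonic n)),
        ((Bad.filter (fun n => ¬ n < p ^ a)).filter (fun n => n / p ^ a = b)).card ≤ p ^ a := by
      intro b _
      have hmaps2 : ∀ n ∈ (Bad.filter (fun n => ¬ n < p ^ a)).filter (fun n => n / p ^ a = b),
          n % p ^ a ∈ Finset.range (p ^ a) :=
        fun n _ => Finset.mem_range.2 (Nat.mod_lt n (pow_pos hp.out.pos _))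
      have hinj2 : Set.InjOn (fun n => n % p ^ a)
          ((Bad.filter (fun n => ¬ n < p ^ a)).filter (fun n => n / p ^ a = b)) := by
        intro n hnT m hmT heq
        simp only [Finset.coe_filter, Set.mem_setOf_eq] at hnT hmT
        have heq' : n % p ^ a = m % p ^ a := heq
        have h3 : p ^ a * (n / p ^ a) + n % p ^ a = n := Nat.div_add_mod n _
        have h4 : p ^ a * (m / p ^ a) + m % p ^ a = m := Nat.div_add_mod m _
        rw [hnT.2] at h3
        rw [hmT.2] at h4
        omega
      have := Finset.card_le_card_of_injOn (t := Finset.range (p ^ a))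
        (fun n => n % p ^ a) hmaps2 hinj2
      simpa using this
    have := Finset.card_le_mul_card_image_of_maps_to hmaps (p ^ a) hfib
    calc (Bad.filter (fun n => ¬ n < p ^ a)).card
        ≤ p ^ a * ((Finset.range (p ^ (L + 1))).filter
            (fun n => 1 ≤ padicValRat p (harmonic n))).card := this
      _ ≤ p ^ a * ((L + 1) * ((p + 1) / 2) ^ (L + 1)) :=
          Nat.mul_le_mul_left _ (gcount (L + 1))
  omega





lemma bad_tendsto (a : ℕ) (ha : 1 ≤ a) :
    Tendsto (fun N : ℕ =>
        ((((Finset.Icc 1 N).filter (fun n => ¬ padicValRat p (harmonic n) ≤ -(a : ℤ))).card : ℝ)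
          / N) )
      atTop (nhds 0) := by
  classical
  have hp2 := hp.out.two_le
  have hppos : (0:ℝ) < p := by positivity
  set c : ℕ := (p + 1) / 2 with hc
  have hclt : c < p := by omega
  set ψ : ℕ → ℝ := fun L => ((p:ℝ) ^ a + (p:ℝ) ^ a * ((L + 1) * (c:ℝ) ^ (L + 1))) / (p:ℝ) ^ L
    with hψdef
  have hψ : Tendsto ψ atTop (nhds 0) := by
    have hx0 : (0:ℝ) ≤ (c:ℝ) / p := by positivity
    have hx1 : (c:ℝ) / p < 1 := by
      rw [div_lt_one hppos]
      exact_mod_cast hclt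
    have h1 : Tendsto (fun L : ℕ => ((1:ℝ) / p) ^ L) atTop (nhds 0) :=
      tendsto_pow_atTop_nhds_zero_of_lt_one (by positivity)
        (by rw [div_lt_one hppos]; exact_mod_cast hp.out.one_lt)
    have h2 : Tendsto (fun L : ℕ => (L : ℝ) * ((c:ℝ) / p) ^ L) atTop (nhds 0) :=
      tendsto_self_mul_const_pow_of_lt_one hx0 hx1
    have h3 : Tendsto (fun L : ℕ => ((c:ℝ) / p) ^ L) atTop (nhds 0) :=
      tendsto_pow_atTop_nhds_zero_of_lt_one hx0 hx1
    have hcomb : Tendsto (fun L : ℕ =>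
        (p:ℝ) ^ a * ((1 / p : ℝ) ^ L)
          + ((p:ℝ) ^ a * c) * ((L:ℝ) * ((c:ℝ) / p) ^ L + ((c:ℝ) / p) ^ L)) atTop
        (nhds ((p:ℝ) ^ a * 0 + ((p:ℝ) ^ a * c) * (0 + 0))) :=
      Tendsto.add (h1.const_mul _) ((h2.add h3).const_mul _)
    have heq : ∀ L : ℕ, (p:ℝ) ^ a * ((1 / p : ℝ) ^ L)
          + ((p:ℝ) ^ a * c) * ((L:ℝ) * ((c:ℝ) / p) ^ L + ((c:ℝ) / p) ^ L) = ψ L := by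
      intro L
      rw [hψdef]
      simp only [div_pow, one_pow]
      have hpL : (p:ℝ) ^ L ≠ 0 := by positivity
      field_simp
      ring
    rw [show (0:ℝ) = (p:ℝ) ^ a * 0 + ((p:ℝ) ^ a * c) * (0 + 0) by ring]
    exact hcomb.congr heq
  have hcomp : Tendsto (fun N : ℕ => ψ (Nat.log p N)) atTop (nhds 0) := by
    refine hψ.comp ?_
    refine tendsto_atTop_atTop.2 fun K => ⟨p ^ K, fun N hN => ?_⟩
    have hN0 : N ≠ 0 := by
      have : 1 ≤ p ^ K := Nat.one_le_pow _ _ hp.out.pos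
      omega
    exact (Nat.le_log_iff_pow_le hp.out.one_lt hN0).2 hN
  refine tendsto_of_tendsto_of_tendsto_of_le_of_le' tendsto_const_nhds hcomp ?_ ?_
  · filter_upwards with N
    positivity
  · filter_upwards [eventually_ge_atTop 1] with N hN1
    set L := Nat.log p N with hL
    have hbc := bad_count (p := p) a N ha
    have hNL : (p:ℝ) ^ L ≤ (N:ℝ) := by
      exact_mod_cast Nat.pow_log_le_self p (by omega : N ≠ 0)
    have hXcast : ((((Finset.Icc 1 N).filter
        (fun n => ¬ padicValRat p (harmonic n) ≤ -(a : ℤ))).card : ℝ))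
        ≤ (p:ℝ) ^ a + (p:ℝ) ^ a * ((L + 1) * (c:ℝ) ^ (L + 1)) := by
      have := hbc
      push_cast
      exact_mod_cast this
    refine le_trans (div_le_div₀ (by positivity) hXcast (by positivity) hNL) ?_
    exact le_of_eq rfl


end DensityHarm


open DensityHarm Finset Filter in
/-- For any positive integer `m`, the set of positive integers `n` such that `m` divides the
denominator `v_n` of the `n`-th harmonic number has natural density one. -/
theorem density_one_dvd_harmonic_den (m : ℕ) (hm : 0 < m) :
    Filter.Tendsto
      (fun x : ℝ =>
        (((Finset.Icc 1 ⌊x⌋₊).filter (fun n : ℕ => m ∣ (harmonic n).den)).card : ℝ) / x)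
      Filter.atTop (nhds 1) := by
  classical
  set K := m.primeFactors with hK
  set B : ℕ → ℕ :=
    fun N => ((Finset.Icc 1 N).filter (fun n => ¬ m ∣ (harmonic n).den)).card with hB
  have hsubset : ∀ N : ℕ, ((Finset.Icc 1 N).filter (fun n => ¬ m ∣ (harmonic n).den))
      ⊆ K.biUnion (fun q => (Finset.Icc 1 N).filter
          (fun n => ¬ padicValRat q (harmonic n) ≤ -((m.factorization q : ℕ) : ℤ))) := by
    intro N n hn
    rw [Finset.mem_filter] at hn
    obtain ⟨hmem, hnd⟩ := hn
    rw [Finset.mem_biUnion]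
    by_contra hcon
    push_neg at hcon
    apply hnd
    have hden0 : (harmonic n).den ≠ 0 := (harmonic n).den_nz
    rw [← Nat.factorization_le_iff_dvd hm.ne' hden0, Finsupp.le_iff]
    intro q hq
    rw [Nat.support_factorization] at hq
    have hqprime : q.Prime := Nat.prime_of_mem_primeFactors hq
    haveI : Fact q.Prime := ⟨hqprime⟩
    have ha : 1 ≤ m.factorization q :=
      hqprime.factorization_pos_of_dvd hm.ne' (Nat.dvd_of_mem_primeFactors hq)
    have hnotmem := hcon q hq
    rw [Finset.mem_filter] at hnotmem
    push_neg at hnotmem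
    have hval : padicValRat q (harmonic n) ≤ -((m.factorization q : ℕ) : ℤ) :=
      hnotmem hmem
    have hdvd : q ^ (m.factorization q) ∣ (harmonic n).den :=
      (den_dvd_iff ha (harmonic n)).2 hval
    exact (hqprime.pow_dvd_iff_le_factorization hden0).1 hdvd
  have hcardle : ∀ N : ℕ, B N ≤ ∑ q ∈ K, ((Finset.Icc 1 N).filter
      (fun n => ¬ padicValRat q (harmonic n) ≤ -((m.factorization q : ℕ) : ℤ))).card := by
    intro N
    exact le_trans (Finset.card_le_card (hsubset N)) Finset.card_biUnion_le
  have hsum : Tendsto (fun N : ℕ => ∑ q ∈ K, ((((Finset.Icc 1 N).filter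
      (fun n => ¬ padicValRat q (harmonic n) ≤ -((m.factorization q : ℕ) : ℤ))).card : ℝ) / N))
      atTop (nhds 0) := by
    have := tendsto_finset_sum K (fun q hq => by
      have hqprime : q.Prime := Nat.prime_of_mem_primeFactors hq
      haveI : Fact q.Prime := ⟨hqprime⟩
      exact bad_tendsto (p := q) (m.factorization q)
        (hqprime.factorization_pos_of_dvd hm.ne' (Nat.dvd_of_mem_primeFactors hq)))
    simpa using this
  have hBtend : Tendsto (fun N : ℕ => ((B N : ℝ) / N)) atTop (nhds 0) := by
    refine tendsto_of_tendsto_of_tendsto_of_le_of_le' tendsto_const_nhds hsum ?_ ?_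
    · filter_upwards with N; positivity
    · filter_upwards [eventually_ge_atTop 1] with N hN1
      have hNpos : (0:ℝ) < N := by exact_mod_cast hN1
      rw [← Finset.sum_div, div_le_div_iff_of_pos_right hNpos]
      exact_mod_cast hcardle N
  have hBx : Tendsto (fun x : ℝ => ((B ⌊x⌋₊ : ℝ) / x)) atTop (nhds 0) := by
    have hcomp : Tendsto (fun x : ℝ => ((B ⌊x⌋₊ : ℝ) / (⌊x⌋₊ : ℝ))) atTop (nhds 0) :=
      hBtend.comp (tendsto_nat_floor_atTop (α := ℝ))
    refine tendsto_of_tendsto_of_tendsto_of_le_of_le' tendsto_const_nhds hcomp ?_ ?_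
    · filter_upwards [eventually_ge_atTop (1:ℝ)] with x hx
      have hx0 : (0:ℝ) < x := by linarith
      positivity
    · filter_upwards [eventually_ge_atTop (1:ℝ)] with x hx
      have h1 : (1:ℝ) ≤ (⌊x⌋₊ : ℝ) := by
        have := Nat.le_floor (α := ℝ) (n := 1) (by exact_mod_cast hx)
        exact_mod_cast this
      have h2 : (⌊x⌋₊ : ℝ) ≤ x := Nat.floor_le (by linarith)
      gcongr
  have hgood : (fun x : ℝ => ((⌊x⌋₊ : ℝ) / x - (B ⌊x⌋₊ : ℝ) / x)) =ᶠ[atTop]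
      (fun x : ℝ =>
        (((Finset.Icc 1 ⌊x⌋₊).filter (fun n : ℕ => m ∣ (harmonic n).den)).card : ℝ) / x) := by
    filter_upwards with x
    have hsplitc := Finset.card_filter_add_card_filter_not
      (s := Finset.Icc 1 ⌊x⌋₊) (p := fun n : ℕ => m ∣ (harmonic n).den)
    rw [Nat.card_Icc] at hsplitc
    have hBeq : B ⌊x⌋₊
        = ((Finset.Icc 1 ⌊x⌋₊).filter (fun n : ℕ => ¬ m ∣ (harmonic n).den)).card := rfl
    have hcv : (((Finset.Icc 1 ⌊x⌋₊).filter (fun n : ℕ => m ∣ (harmonic n).den)).card)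
        = ⌊x⌋₊ - B ⌊x⌋₊ := by omega
    have hle : B ⌊x⌋₊ ≤ ⌊x⌋₊ := by omega
    rw [hcv, Nat.cast_sub hle]
    ring
  have hlim := (tendsto_nat_floor_div_atTop (R := ℝ)).sub hBx
  rw [sub_zero] at hlim
  exact Tendsto.congr' hgood hlim
end

section
/- For any prime p and any positive integer k, the set I_{p^k} of positive integers n with p^k not dividing v_n satisfies I_{p^k} = { p^k·n_1 + r : n_1 ∈ J_p ∪ {0}, 0 ≤ r ≤ p^k − 1 } \ {0}. -/
section aux

variable {p : ℕ} [hp : Fact p.Prime]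

private lemma harmonic_split (n : ℕ) :
    harmonic n = (∑ i ∈ Finset.range n, if p ∣ (i + 1) then 0 else ((i + 1 : ℕ) : ℚ)⁻¹)
      + harmonic (n / p) / p := by
  induction n with
  | zero => simp
  | succ n ih =>
    rw [harmonic_succ, Finset.sum_range_succ, ih, Nat.succ_div]
    by_cases h : p ∣ n + 1
    · rw [if_pos h, if_pos h, harmonic_succ]
      have hp0 : (p : ℚ) ≠ 0 := Nat.cast_ne_zero.mpr hp.out.ne_zero
      have key : ((n + 1 : ℕ) : ℚ) = ((n / p + 1 : ℕ) : ℚ) * p := by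
        have : (n / p + 1) * p = n + 1 := by
          rw [← Nat.succ_div_of_dvd h, Nat.div_mul_cancel h]
        exact_mod_cast this.symm
      rw [key]
      field_simp
      ring
    · rw [if_neg h, if_neg h]
      simp only [Nat.add_zero]
      ring

private lemma padicNorm_aux_le (n : ℕ) :
    padicNorm p (∑ i ∈ Finset.range n, if p ∣ (i + 1) then 0 else ((i + 1 : ℕ) : ℚ)⁻¹) ≤ 1 := by
  refine padicNorm.sum_le' (fun i _ => ?_) zero_le_one
  by_cases h : p ∣ (i + 1)
  · simp [h]
  · rw [if_neg h, ← one_div, padicNorm.div, padicNorm.one,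
      (padicNorm.nat_eq_one_iff _).mpr h]
    norm_num

private lemma norm_step (c : ℤ) (hc : 0 ≤ c) (n : ℕ) :
    padicNorm p (harmonic n) ≤ (p : ℚ) ^ c ↔
      padicNorm p (harmonic (n / p)) ≤ (p : ℚ) ^ (c - 1) := by
  have hp1 : (1 : ℚ) < p := by exact_mod_cast hp.out.one_lt
  have hppos : (0 : ℚ) < p := lt_trans one_pos hp1
  have hid := harmonic_split (p := p) n
  set A := ∑ i ∈ Finset.range n, if p ∣ (i + 1) then 0 else ((i + 1 : ℕ) : ℚ)⁻¹ with hA_def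
  have hA : padicNorm p A ≤ 1 := padicNorm_aux_le n
  have hone_le : (1 : ℚ) ≤ (p : ℚ) ^ c := by
    calc (1 : ℚ) = (p : ℚ) ^ (0 : ℤ) := (zpow_zero _).symm
    _ ≤ (p : ℚ) ^ c := zpow_le_zpow_right₀ hp1.le hc
  have hB : padicNorm p (harmonic (n / p) / p) = padicNorm p (harmonic (n / p)) * p := by
    rw [padicNorm.div, padicNorm.padicNorm_p_of_prime, div_inv_eq_mul]
  by_cases h : padicNorm p (harmonic (n / p)) ≤ (p : ℚ) ^ (-1 : ℤ)
  · constructor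
    · intro _
      exact h.trans (zpow_le_zpow_right₀ hp1.le (by omega))
    · intro _
      rw [hid]
      refine le_trans padicNorm.nonarchimedean (max_le (hA.trans hone_le) ?_)
      rw [hB]
      calc padicNorm p (harmonic (n / p)) * p ≤ (p : ℚ) ^ (-1 : ℤ) * p := by
            exact mul_le_mul_of_nonneg_right h hppos.le
      _ = 1 := by rw [zpow_neg_one]; field_simp
      _ ≤ (p : ℚ) ^ c := hone_le
  · push_neg at h
    have hm0 : harmonic (n / p) ≠ 0 := by
      intro h0
      rw [h0, padicNorm.zero] at h
      exact absurd h (not_lt.mpr (zpow_pos hppos _).le)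
    have hone_le_norm : (1 : ℚ) ≤ padicNorm p (harmonic (n / p)) := by
      rw [padicNorm.eq_zpow_of_nonzero hm0] at h ⊢
      rw [zpow_lt_zpow_iff_right₀ hp1] at h
      calc (1 : ℚ) = (p : ℚ) ^ (0 : ℤ) := (zpow_zero _).symm
      _ ≤ _ := zpow_le_zpow_right₀ hp1.le (by omega)
    have hBA : padicNorm p A < padicNorm p (harmonic (n / p) / p) := by
      rw [hB]
      calc padicNorm p A ≤ 1 := hA
      _ < p := hp1
      _ = 1 * p := (one_mul _).symm
      _ ≤ padicNorm p (harmonic (n / p)) * p :=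
        mul_le_mul_of_nonneg_right hone_le_norm hppos.le
    have hmax : padicNorm p (harmonic n) = padicNorm p (harmonic (n / p)) * p := by
      rw [hid, padicNorm.add_eq_max_of_ne hBA.ne, max_eq_right hBA.le, hB]
    rw [hmax, zpow_sub_one₀ hppos.ne', ← le_div_iff₀ hppos, div_eq_mul_inv]

private lemma norm_iter (j : ℕ) (n : ℕ) :
    padicNorm p (harmonic n) ≤ (p : ℚ) ^ (j : ℤ) ↔
      padicNorm p (harmonic (n / p ^ (j + 1))) ≤ (p : ℚ) ^ (-1 : ℤ) := by
  induction j generalizing n with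
  | zero => simpa using norm_step 0 le_rfl n
  | succ j ih =>
    rw [show ((j + 1 : ℕ) : ℤ) = (j : ℤ) + 1 by push_cast; ring,
      norm_step ((j : ℤ) + 1) (by positivity) n]
    have h1 : ((j : ℤ) + 1) - 1 = (j : ℤ) := by ring
    rw [h1, ih (n / p)]
    have h2 : n / p / p ^ (j + 1) = n / p ^ (j + 1 + 1) := by
      rw [Nat.div_div_eq_div_mul, ← pow_succ']
    rw [h2]

private lemma norm_base (m : ℕ) :
    padicNorm p (harmonic m) ≤ (p : ℚ) ^ (-1 : ℤ) ↔
      (m = 0 ∨ (p : ℤ) ∣ (harmonic m).num) := by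
  have hp1 : (1 : ℚ) < p := by exact_mod_cast hp.out.one_lt
  rcases eq_or_ne m 0 with rfl | hm
  · simp only [harmonic_zero, padicNorm.zero, true_or, iff_true]
    exact (zpow_pos (lt_trans one_pos hp1) _).le
  · have h0 : harmonic m ≠ 0 := (harmonic_pos hm).ne'
    have hnum : (harmonic m).num ≠ 0 := Rat.num_ne_zero.mpr h0
    rw [padicNorm.eq_zpow_of_nonzero h0, zpow_le_zpow_iff_right₀ hp1, neg_le,
      padicValRat]
    constructor
    · intro hle
      have hu : 1 ≤ padicValInt p (harmonic m).num := by omega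
      refine Or.inr (Int.natCast_dvd.mpr ?_)
      exact dvd_of_one_le_padicValNat hu
    · rintro (h | hdvd); · exact absurd h hm
      have hu : 1 ≤ padicValInt p (harmonic m).num :=
        one_le_padicValNat_of_dvd (Int.natAbs_ne_zero.mpr hnum) (Int.natCast_dvd.mp hdvd)
      have hd : padicValNat p (harmonic m).den = 0 := by
        apply padicValNat.eq_zero_of_not_dvd
        intro hden
        exact hp.out.one_lt.ne' (Nat.eq_one_of_dvd_coprimes (harmonic m).reduced
          (Int.natCast_dvd.mp hdvd) hden)
      omega

private lemma den_iff {k : ℕ} (hk : 0 < k) {n : ℕ} (hn : n ≠ 0) :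
    (¬ p ^ k ∣ (harmonic n).den) ↔
      padicNorm p (harmonic n) ≤ (p : ℚ) ^ ((k : ℤ) - 1) := by
  have hp1 : (1 : ℚ) < p := by exact_mod_cast hp.out.one_lt
  have h0 : harmonic n ≠ 0 := (harmonic_pos hn).ne'
  have hden : (harmonic n).den ≠ 0 := (harmonic n).den_nz
  rw [padicValNat_dvd_iff_le hden, padicNorm.eq_zpow_of_nonzero h0,
    zpow_le_zpow_iff_right₀ hp1, padicValRat]
  by_cases hd : p ∣ (harmonic n).den
  · have hu : padicValInt p (harmonic n).num = 0 := by
      apply padicValInt.eq_zero_of_not_dvd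
      rw [Int.natCast_dvd]
      intro hnum
      exact hp.out.one_lt.ne' (Nat.eq_one_of_dvd_coprimes (harmonic n).reduced hnum hd)
    omega
  · have hd0 : padicValNat p (harmonic n).den = 0 := padicValNat.eq_zero_of_not_dvd hd
    omega

private lemma main_iff {k : ℕ} (hk : 0 < k) {n : ℕ} (hn : n ≠ 0) :
    (¬ p ^ k ∣ (harmonic n).den) ↔
      (n / p ^ k = 0 ∨ (p : ℤ) ∣ (harmonic (n / p ^ k)).num) := by
  rw [den_iff hk hn]
  obtain ⟨j, rfl⟩ : ∃ j, k = j + 1 := ⟨k - 1, by omega⟩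
  have h1 : ((j + 1 : ℕ) : ℤ) - 1 = (j : ℤ) := by push_cast; ring
  rw [h1, norm_iter j n, norm_base]

end aux

/-- For any prime `p` and positive integer `k`, the set of positive integers `n` with
`p^k ∤ v_n` equals `{p^k * n₁ + r : n₁ ∈ J_p ∪ {0}, 0 ≤ r ≤ p^k - 1} \ {0}`, where
`J_p` is the set of positive integers `n` with `p ∣ u_n`. -/
theorem not_dvd_harmonic_den_set_eq (p : ℕ) (hp : p.Prime) (k : ℕ) (hk : 0 < k) :
    {n : ℕ | 0 < n ∧ ¬ p ^ k ∣ (harmonic n).den} =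
      {n : ℕ | ∃ n₁ r : ℕ,
          (n₁ ∈ {n : ℕ | 0 < n ∧ (p : ℤ) ∣ (harmonic n).num} ∪ {0}) ∧
          r ≤ p ^ k - 1 ∧ n = p ^ k * n₁ + r} \ {0} := by
  haveI : Fact p.Prime := ⟨hp⟩
  have hpk : 0 < p ^ k := pow_pos hp.pos k
  ext n
  simp only [Set.mem_setOf_eq, Set.mem_diff, Set.mem_union, Set.mem_singleton_iff]
  constructor
  · rintro ⟨hn, hd⟩
    refine ⟨⟨n / p ^ k, n % p ^ k, ?_, ?_, (Nat.div_add_mod n (p ^ k)).symm⟩, hn.ne'⟩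
    · rcases (main_iff hk hn.ne').mp hd with h | h
      · exact Or.inr h
      · rcases Nat.eq_zero_or_pos (n / p ^ k) with h0 | h0
        · exact Or.inr h0
        · exact Or.inl ⟨h0, h⟩
    · have := Nat.mod_lt n hpk
      omega
  · rintro ⟨⟨n₁, r, h₁, hr, rfl⟩, hn0⟩
    have hq : (p ^ k * n₁ + r) / p ^ k = n₁ := by
      rw [Nat.mul_add_div hpk, Nat.div_eq_of_lt (by omega), Nat.add_zero]
    refine ⟨Nat.pos_of_ne_zero hn0, (main_iff hk hn0).mpr ?_⟩
    rw [hq]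
    rcases h₁ with ⟨_, hdvd⟩ | h0
    · exact Or.inr hdvd
    · exact Or.inl h0
end

section
/- For any prime p, any positive integer k, and any positive integer n with n < p^k, the prime power p^k does not divide v_n. -/
lemma padicValNat_lt_of_lt_pow {p k i : ℕ} (hp : p.Prime) (hi : 0 < i) (h : i < p ^ k) :
    padicValNat p i < k := by
  by_contra hle
  push_neg at hle
  have : p ^ k ∣ i := dvd_trans (pow_dvd_pow p hle) (pow_padicValNat_dvd)
  exact absurd (Nat.le_of_dvd hi this) (not_le.mpr h)

lemma harmonic_padicValRat_ge (p : ℕ) (hp : p.Prime) (k : ℕ) (hk : 0 < k) :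
    ∀ n : ℕ, 0 < n → n < p ^ k → -(k - 1 : ℤ) ≤ padicValRat p (harmonic n) := by
  haveI : Fact p.Prime := ⟨hp⟩
  intro n
  induction n with
  | zero => intro h; exact absurd h (lt_irrefl 0)
  | succ n ih =>
    intro _ hlt
    have hterm : -(k - 1 : ℤ) ≤ padicValRat p ((↑(n + 1) : ℚ))⁻¹ := by
      rw [padicValRat.inv, padicValRat.of_nat]
      have h := padicValNat_lt_of_lt_pow (k := k) hp (Nat.succ_pos n) hlt
      simp only [Nat.succ_eq_add_one] at h ⊢
      omega
    rcases Nat.eq_zero_or_pos n with h0 | hpos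
    · subst h0
      simpa [harmonic_succ, harmonic_zero] using hterm
    · have hih := ih hpos (lt_trans (Nat.lt_succ_self n) hlt)
      rw [harmonic_succ]
      have hne : harmonic n + (↑(n + 1) : ℚ)⁻¹ ≠ 0 := by
        have := harmonic_pos (Nat.succ_ne_zero n)
        rw [harmonic_succ] at this
        exact this.ne'
      calc -(k - 1 : ℤ) ≤ min (padicValRat p (harmonic n)) (padicValRat p ((↑(n + 1) : ℚ))⁻¹) :=
            le_min hih hterm
        _ ≤ _ := padicValRat.min_le_padicValRat_add hne

/-- For a prime `p`, positive integer `k` and positive integer `n < p^k`, the prime power `p^k`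
does not divide the denominator `v_n` of the `n`-th harmonic number. -/
theorem not_dvd_harmonic_den_of_lt (p : ℕ) (hp : p.Prime) (k : ℕ) (hk : 0 < k)
    (n : ℕ) (hn : 0 < n) (hnp : n < p ^ k) :
    ¬ p ^ k ∣ (harmonic n).den := by
  haveI : Fact p.Prime := ⟨hp⟩
  intro hdvd
  have hq : harmonic n ≠ 0 := (harmonic_pos hn.ne').ne'
  have hden : (k : ℤ) ≤ padicValNat p (harmonic n).den := by
    have hd0 : (harmonic n).den ≠ 0 := (harmonic n).den_nz
    have := (Nat.Prime.pow_dvd_iff_le_factorization hp hd0).mp hdvd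
    rw [Nat.factorization_def _ hp] at this
    exact_mod_cast this
  -- p does not divide numerator
  have hpden : p ∣ (harmonic n).den := dvd_trans (dvd_pow_self p hk.ne') hdvd
  have hnum : ¬ (p : ℤ) ∣ (harmonic n).num := by
    intro hpn
    have h1 : p ∣ (harmonic n).num.natAbs := by
      have := Int.natAbs_dvd_natAbs.mpr hpn
      simpa using this
    have : p ∣ Nat.gcd (harmonic n).num.natAbs (harmonic n).den := Nat.dvd_gcd h1 hpden
    rw [(harmonic n).reduced] at this
    exact hp.one_lt.ne' (Nat.dvd_one.mp this)
  have hvalnum : padicValInt p (harmonic n).num = 0 :=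
    padicValInt.eq_zero_of_not_dvd hnum
  have hval := harmonic_padicValRat_ge p hp k hk n hn hnp
  rw [padicValRat, hvalnum] at hval
  omega
end

section
/- Let p be a prime, k a positive integer, and n ≥ p^k a positive integer. Write n = p^k·n_1 + r with integers n_1 ≥ 1 and 0 ≤ r ≤ p^k − 1. If p divides the numerator u_{n_1} of H_{n_1}, then p^k does not divide v_n. -/
private lemma aux_le_padicValRat_sum (p : ℕ) [Fact p.Prime] (c : ℤ) (F : ℕ → ℚ)
    (S : Finset ℕ) (hne : S.Nonempty) (hpos : ∀ i ∈ S, 0 < F i)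
    (hv : ∀ i ∈ S, c ≤ padicValRat p (F i)) :
    c ≤ padicValRat p (∑ i ∈ S, F i) := by
  induction S using Finset.cons_induction with
  | empty => exact absurd hne (by simp)
  | cons a S ha ih =>
    rw [Finset.sum_cons]
    rcases S.eq_empty_or_nonempty with h | h
    · simpa [h] using hv a (by simp)
    · have hS : 0 < ∑ i ∈ S, F i :=
        Finset.sum_pos (fun i hi => hpos i (Finset.mem_cons_of_mem hi)) h
      have h0 : F a + ∑ i ∈ S, F i ≠ 0 :=
        (add_pos (hpos a (Finset.mem_cons_self a S)) hS).ne'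
      refine le_trans ?_ (padicValRat.min_le_padicValRat_add h0)
      exact le_min (hv a (Finset.mem_cons_self a S))
        (ih h (fun i hi => hpos i (Finset.mem_cons_of_mem hi))
          (fun i hi => hv i (Finset.mem_cons_of_mem hi)))

/-- Let `p` be prime, `k ≥ 1`, and `n ≥ p^k` with `n = p^k * n₁ + r`, `n₁ ≥ 1`,
`0 ≤ r ≤ p^k - 1`. If `p` divides the numerator `u_{n₁}` of `H_{n₁}`, then `p^k` does not
divide the denominator `v_n` of `H_n`. -/
theorem not_dvd_harmonic_den_of_dvd_num (p : ℕ) (hp : p.Prime) (k : ℕ) (hk : 0 < k)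
    (n n₁ r : ℕ) (hn : p ^ k ≤ n) (hn₁ : 1 ≤ n₁) (hr : r ≤ p ^ k - 1)
    (heq : n = p ^ k * n₁ + r) (hdvd : (p : ℤ) ∣ (harmonic n₁).num) :
    ¬ p ^ k ∣ (harmonic n).den := by
  haveI : Fact p.Prime := ⟨hp⟩
  have hpk1 : 1 < p ^ k := one_lt_pow₀ hp.one_lt hk.ne'
  have hpk0 : 0 < p ^ k := lt_trans one_pos hpk1
  have hrlt : r < p ^ k := lt_of_le_of_lt hr (Nat.sub_lt hpk0 one_pos)
  have hn0 : n ≠ 0 := by omega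
  have hn₁0 : n₁ ≠ 0 := by omega
  -- split the harmonic sum
  set A : ℚ := ∑ j ∈ Finset.Icc 1 n₁, ((p : ℚ) ^ k * (j : ℚ))⁻¹ with hA
  set B : ℚ := ∑ i ∈ (Finset.Icc 1 n).filter (fun i => ¬ p ^ k ∣ i), ((i : ℚ))⁻¹ with hB
  have hsplit : harmonic n = A + B := by
    rw [harmonic_eq_sum_Icc, ← Finset.sum_filter_add_sum_filter_not (Finset.Icc 1 n)
      (fun i => p ^ k ∣ i)]
    congr 1
    rw [hA]
    refine Finset.sum_nbij' (fun i => i / p ^ k) (fun j => p ^ k * j) ?_ ?_ ?_ ?_ ?_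
    · intro i hi
      simp only [Finset.mem_filter, Finset.mem_Icc] at hi
      obtain ⟨⟨h1, h2⟩, ⟨d, hd⟩⟩ := hi
      subst hd
      rw [Nat.mul_div_cancel_left _ hpk0]
      rw [Finset.mem_Icc]
      constructor
      · rcases Nat.eq_zero_or_pos d with h | h
        · subst h; simp at h1
        · exact h
      · nlinarith [heq ▸ h2]
    · intro j hj
      simp only [Finset.mem_Icc] at hj
      simp only [Finset.mem_filter, Finset.mem_Icc]
      refine ⟨⟨?_, ?_⟩, Dvd.intro j rfl⟩
      · nlinarith [hj.1]
      · have := hj.2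
        calc p ^ k * j ≤ p ^ k * n₁ := Nat.mul_le_mul_left _ this
          _ ≤ n := by omega
    · intro i hi
      simp only [Finset.mem_filter] at hi
      obtain ⟨-, ⟨d, hd⟩⟩ := hi
      subst hd
      rw [Nat.mul_div_cancel_left _ hpk0]
    · intro j _
      rw [Nat.mul_div_cancel_left _ hpk0]
    · intro i hi
      simp only [Finset.mem_filter] at hi
      obtain ⟨-, ⟨d, hd⟩⟩ := hi
      subst hd
      rw [Nat.mul_div_cancel_left _ hpk0]
      push_cast
      ring_nf
  -- A equals (p^k)⁻¹ * harmonic n₁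
  have hAeq : A = ((p : ℚ) ^ k)⁻¹ * harmonic n₁ := by
    rw [hA, harmonic_eq_sum_Icc, Finset.mul_sum]
    refine Finset.sum_congr rfl fun j _ => ?_
    rw [mul_inv]
  have hp0Q : (p : ℚ) ≠ 0 := Nat.cast_ne_zero.mpr hp.pos.ne'
  have hH₁pos : 0 < harmonic n₁ := harmonic_pos hn₁0
  -- valuation of harmonic n₁ is ≥ 1
  have hnum0 : (harmonic n₁).num ≠ 0 := Rat.num_ne_zero.mpr hH₁pos.ne'
  have hpden : ¬ p ∣ (harmonic n₁).den := by
    intro hpd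
    have hc : (harmonic n₁).num.natAbs.Coprime (harmonic n₁).den := (harmonic n₁).reduced
    have h1 : p ∣ (harmonic n₁).num.natAbs := by
      simpa using Int.natAbs_dvd_natAbs.mpr hdvd
    exact hp.one_lt.ne' (Nat.eq_one_of_dvd_coprimes hc h1 hpd)
  have hvalH₁ : 1 ≤ padicValRat p (harmonic n₁) := by
    rw [padicValRat]
    have h1 : 1 ≤ padicValInt p (harmonic n₁).num := by
      have := (padicValInt_dvd_iff (p := p) 1 (harmonic n₁).num).mp (by simpa using hdvd)
      omega
    have h2 : padicValNat p (harmonic n₁).den = 0 := padicValNat.eq_zero_of_not_dvd hpden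
    omega
  -- valuation of A
  have hA0 : A ≠ 0 := by
    rw [hAeq]; positivity
  have hvalA : 1 - (k : ℤ) ≤ padicValRat p A := by
    have hmul : padicValRat p A = padicValRat p (((p : ℚ) ^ k)⁻¹)
        + padicValRat p (harmonic n₁) := by
      rw [hAeq, padicValRat.mul (by positivity) hH₁pos.ne']
    have hinv : padicValRat p (((p : ℚ) ^ k)⁻¹) = -(k : ℤ) := padicValRat.self_pow_inv k
    rw [hmul, hinv]
    omega
  -- valuation of B
  have hBne : ((Finset.Icc 1 n).filter (fun i => ¬ p ^ k ∣ i)).Nonempty := by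
    refine ⟨1, ?_⟩
    simp only [Finset.mem_filter, Finset.mem_Icc]
    exact ⟨⟨le_refl 1, by omega⟩, fun h => absurd (Nat.le_of_dvd one_pos h) (by omega)⟩
  have hvalB : 1 - (k : ℤ) ≤ padicValRat p B := by
    refine aux_le_padicValRat_sum p _ _ _ hBne ?_ ?_
    · intro i hi
      simp only [Finset.mem_filter, Finset.mem_Icc] at hi
      have : (0 : ℚ) < i := by exact_mod_cast (by omega : 0 < i)
      positivity
    · intro i hi
      simp only [Finset.mem_filter, Finset.mem_Icc] at hi
      obtain ⟨⟨h1, -⟩, h2⟩ := hi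
      have hi0 : i ≠ 0 := by omega
      have hvle : padicValNat p i ≤ k - 1 := by
        by_contra hcon
        push_neg at hcon
        have : k ≤ padicValNat p i := by omega
        exact h2 ((padicValNat_dvd_iff_le hi0).mpr this)
      have : padicValRat p ((i : ℚ))⁻¹ = -(padicValNat p i : ℤ) := by
        rw [padicValRat.inv, padicValRat.of_nat]
      rw [this]
      omega
  have hB0 : 0 < B := by
    refine Finset.sum_pos ?_ hBne
    intro i hi
    simp only [Finset.mem_filter, Finset.mem_Icc] at hi
    have : (0 : ℚ) < i := by exact_mod_cast (by omega : 0 < i)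
    positivity
  -- valuation of harmonic n
  have hApos : 0 < A := by rw [hAeq]; positivity
  have hsum0 : A + B ≠ 0 := (add_pos hApos hB0).ne'
  have hvaln : 1 - (k : ℤ) ≤ padicValRat p (harmonic n) := by
    rw [hsplit]
    exact le_trans (le_min hvalA hvalB) (padicValRat.min_le_padicValRat_add hsum0)
  -- finish
  intro hdvdden
  have hden0 : (harmonic n).den ≠ 0 := (harmonic n).den_nz
  have hkle : k ≤ padicValNat p (harmonic n).den := by
    have := (padicValNat_dvd_iff_le hden0).mp hdvdden
    omega
  have hpdvdden : p ∣ (harmonic n).den := dvd_trans (dvd_pow_self p hk.ne') hdvdden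
  have hpnum : ¬ (p : ℤ) ∣ (harmonic n).num := by
    intro hpn
    have hc : (harmonic n).num.natAbs.Coprime (harmonic n).den := (harmonic n).reduced
    have h1 : p ∣ (harmonic n).num.natAbs := by
      simpa using Int.natAbs_dvd_natAbs.mpr hpn
    exact hp.one_lt.ne' (Nat.eq_one_of_dvd_coprimes hc h1 hpdvdden)
  have hvz : padicValInt p (harmonic n).num = 0 := padicValInt.eq_zero_of_not_dvd hpnum
  have : padicValRat p (harmonic n) = -(padicValNat p (harmonic n).den : ℤ) := by
    rw [padicValRat, hvz]; ring
  omega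
end

section
/- Let p be a prime, k a positive integer, and n ≥ p^k a positive integer. Write n = p^k·n_1 + r with integers n_1 ≥ 1 and 0 ≤ r ≤ p^k − 1. If p does not divide the numerator u_{n_1} of H_{n_1}, then p^k divides v_n. -/
open Finset

private lemma aux_lt_sum (p : ℕ) [Fact p.Prime] (c : ℤ) (S : Finset ℕ) (F : ℕ → ℚ)
    (hS : S.Nonempty) (hpos : ∀ i ∈ S, 0 < F i)
    (hv : ∀ i ∈ S, c < padicValRat p (F i)) :
    c < padicValRat p (∑ i ∈ S, F i) := by
  induction hS using Finset.Nonempty.cons_induction with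
  | singleton k => simpa using hv k (by simp)
  | cons k s hks hne ih =>
    rw [Finset.sum_cons]
    have hs : 0 < ∑ i ∈ s, F i :=
      Finset.sum_pos (fun i hi => hpos i (by simp [hi])) hne
    have hk : 0 < F k := hpos k (by simp)
    refine lt_of_lt_of_le (lt_min (hv k (by simp))
      (ih (fun i hi => hpos i (by simp [hi])) (fun i hi => hv i (by simp [hi]))))
      (padicValRat.min_le_padicValRat_add (ne_of_gt (add_pos hk hs)))

/-- Let `p` be prime, `k ≥ 1`, and `n ≥ p^k` with `n = p^k * n₁ + r`, `n₁ ≥ 1`,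
`0 ≤ r ≤ p^k - 1`. If `p` does not divide the numerator `u_{n₁}` of `H_{n₁}`, then `p^k`
divides the denominator `v_n` of `H_n`. -/
theorem dvd_harmonic_den_of_not_dvd_num (p : ℕ) (hp : p.Prime) (k : ℕ) (hk : 0 < k)
    (n n₁ r : ℕ) (hn : p ^ k ≤ n) (hn₁ : 1 ≤ n₁) (hr : r ≤ p ^ k - 1)
    (heq : n = p ^ k * n₁ + r) (hndvd : ¬ (p : ℤ) ∣ (harmonic n₁).num) :
    p ^ k ∣ (harmonic n).den := by
  haveI : Fact p.Prime := ⟨hp⟩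
  have hpk0 : 0 < p ^ k := pow_pos hp.pos k
  have hrlt : r < p ^ k := lt_of_le_of_lt hr (Nat.sub_lt hpk0 one_pos)
  -- the multiples of p^k in [1, n] are exactly p^k * j for j in [1, n₁]
  have hset : (Icc 1 n).filter (fun i => p ^ k ∣ i) = (Icc 1 n₁).image (fun j => p ^ k * j) := by
    ext i
    simp only [mem_filter, mem_Icc, mem_image]
    constructor
    · rintro ⟨⟨h1, h2⟩, j, rfl⟩
      refine ⟨j, ⟨?_, ?_⟩, rfl⟩
      · by_contra hj
        push_neg at hj
        interval_cases j
        simp at h1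
      · by_contra hj
        push_neg at hj
        have hmul : p ^ k * (n₁ + 1) ≤ p ^ k * j := Nat.mul_le_mul_left _ hj
        have hexp : p ^ k * (n₁ + 1) = p ^ k * n₁ + p ^ k := by ring
        omega
    · rintro ⟨j, ⟨h1, h2⟩, rfl⟩
      exact ⟨⟨Nat.le_mul_of_pos_right _ (by omega) |>.trans' (by omega),
        by nlinarith⟩, j, rfl⟩
  -- split harmonic n
  set A : ℚ := ((p : ℚ) ^ k)⁻¹ * harmonic n₁ with hA
  set S : Finset ℕ := (Icc 1 n).filter (fun i => ¬ p ^ k ∣ i) with hS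
  have hsplit : harmonic n = A + ∑ i ∈ S, ((i : ℚ))⁻¹ := by
    rw [harmonic_eq_sum_Icc, ← Finset.sum_filter_add_sum_filter_not (Icc 1 n)
      (fun i => p ^ k ∣ i), hset]
    congr 1
    rw [Finset.sum_image (by intro a _ b _ h; exact Nat.eq_of_mul_eq_mul_left hpk0 h)]
    rw [hA, harmonic_eq_sum_Icc, Finset.mul_sum]
    refine Finset.sum_congr rfl fun j hj => ?_
    push_cast
    rw [mul_inv, mul_comm]
  -- valuation of A
  have hH1 : harmonic n₁ ≠ 0 := (harmonic_pos (by omega)).ne'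
  have hvalH1 : padicValRat p (harmonic n₁) ≤ 0 := by
    rw [padicValRat_def, padicValInt.eq_zero_of_not_dvd hndvd]
    simp
  have hpkQ : (0 : ℚ) < (p : ℚ) ^ k := by exact_mod_cast hpk0
  have hAne : A ≠ 0 := mul_ne_zero (inv_ne_zero hpkQ.ne') hH1
  have hvalA : padicValRat p A ≤ -(k : ℤ) := by
    rw [hA, padicValRat.mul (inv_ne_zero hpkQ.ne') hH1]
    have : padicValRat p ((p : ℚ) ^ k)⁻¹ = -(k : ℤ) := padicValRat.self_pow_inv k
    omega
  -- valuation of each term of the remainder sum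
  have hterm : ∀ i ∈ S, padicValRat p A < padicValRat p ((i : ℚ))⁻¹ := by
    intro i hi
    rw [hS, mem_filter, mem_Icc] at hi
    obtain ⟨⟨h1, _⟩, hnd⟩ := hi
    have hi0 : i ≠ 0 := by omega
    have hlt : padicValNat p i < k := by
      by_contra hle
      exact hnd ((padicValNat_dvd_iff_le hi0).mpr (by omega))
    have : padicValRat p ((i : ℚ))⁻¹ = -(padicValNat p i : ℤ) := by
      rw [padicValRat.inv, padicValRat.of_nat]
    rw [this]
    calc padicValRat p A ≤ -(k : ℤ) := hvalA
      _ < -(padicValNat p i : ℤ) := by omega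
  -- valuation of harmonic n
  have hval : padicValRat p (harmonic n) ≤ -(k : ℤ) := by
    rcases S.eq_empty_or_nonempty with hSe | hSne
    · rw [hsplit, hSe]
      simpa using hvalA
    · have hsumpos : 0 < ∑ i ∈ S, ((i : ℚ))⁻¹ := by
        refine Finset.sum_pos (fun i hi => ?_) hSne
        rw [hS, mem_filter, mem_Icc] at hi
        have : (0 : ℚ) < i := by exact_mod_cast (by omega : 0 < i)
        positivity
      have hlt : padicValRat p A < padicValRat p (∑ i ∈ S, ((i : ℚ))⁻¹) := by
        refine aux_lt_sum p _ S _ hSne (fun i hi => ?_) hterm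
        rw [hS, mem_filter, mem_Icc] at hi
        have : (0 : ℚ) < i := by exact_mod_cast (by omega : 0 < i)
        positivity
      rw [hsplit, padicValRat.add_eq_of_lt ?_ hAne hsumpos.ne' hlt]
      · exact hvalA
      · have hApos : 0 < A := by
          rw [hA]
          have := harmonic_pos (n := n₁) (by omega)
          positivity
        positivity
  -- conclude
  have hHn : harmonic n ≠ 0 := (harmonic_pos (by omega)).ne'
  have hden : (k : ℤ) ≤ (padicValNat p (harmonic n).den : ℤ) := by
    rw [padicValRat_def] at hval
    have : (0 : ℤ) ≤ padicValInt p (harmonic n).num := Int.natCast_nonneg _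
    omega
  have : p ^ k ∣ p ^ padicValNat p (harmonic n).den :=
    pow_dvd_pow p (by exact_mod_cast hden)
  exact this.trans pow_padicValNat_dvd
end

section
/- For any prime p, any positive integer k, and any real number x > p^k, the number of positive integers n ≤ x such that p^k does not divide v_n is at most p^k·(J_p(x/p^k) + 1), where J_p(y) denotes the number of elements of J_p that are at most y. -/
private lemma harm_pow_dvd_den_iff {p : ℕ} [Fact p.Prime] {q : ℚ} (hq : q ≠ 0) {k : ℕ}
    (hk : 0 < k) : p ^ k ∣ q.den ↔ padicValRat p q ≤ -(k : ℤ) := by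
  have hden : q.den ≠ 0 := q.den_nz
  constructor
  · intro h
    have hpd : p ∣ q.den := (dvd_pow_self p hk.ne').trans h
    have hnum : ¬ (p : ℤ) ∣ q.num := by
      intro hc
      have h1 : p ∣ q.num.natAbs := Int.ofNat_dvd_left.mp hc
      have h2 : p ∣ Nat.gcd q.num.natAbs q.den := Nat.dvd_gcd h1 hpd
      rw [q.reduced] at h2
      exact (Fact.out : p.Prime).ne_one (Nat.dvd_one.mp h2)
    have hle : (k : ℤ) ≤ (padicValNat p q.den : ℤ) := by
      exact_mod_cast (padicValNat_dvd_iff_le hden).mp h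
    rw [padicValRat_def, padicValInt.eq_zero_of_not_dvd hnum]
    omega
  · intro h
    have h0 : (0 : ℤ) ≤ (padicValInt p q.num : ℤ) := Int.natCast_nonneg _
    rw [padicValRat_def] at h
    have hle : (k : ℤ) ≤ (padicValNat p q.den : ℤ) := by omega
    exact (padicValNat_dvd_iff_le hden).mpr (by exact_mod_cast hle)

private lemma harm_dvd_num_of_pos_val {p : ℕ} [Fact p.Prime] {q : ℚ}
    (h : 0 < padicValRat p q) : (p : ℤ) ∣ q.num := by
  by_contra hc
  rw [padicValRat_def, padicValInt.eq_zero_of_not_dvd hc] at h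
  omega

/-- Decomposition of the harmonic sum into multiples and non-multiples of `p`. -/
private lemma harmonic_decomp {p : ℕ} (hp : 0 < p) (n : ℕ) :
    harmonic n = (p : ℚ)⁻¹ * harmonic (n / p) +
      ∑ i ∈ (Finset.Icc 1 n).filter (fun i => ¬ p ∣ i), (i : ℚ)⁻¹ := by
  rw [harmonic_eq_sum_Icc, harmonic_eq_sum_Icc,
    ← Finset.sum_filter_add_sum_filter_not (Finset.Icc 1 n) (fun i => p ∣ i)]
  congr 1
  rw [Finset.mul_sum]
  refine Finset.sum_nbij' (fun i => i / p) (fun j => p * j) ?_ ?_ ?_ ?_ ?_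
  · intro a ha
    simp only [Finset.mem_filter, Finset.mem_Icc] at ha ⊢
    obtain ⟨⟨h1, h2⟩, h3⟩ := ha
    have hpa : p ≤ a := Nat.le_of_dvd h1 h3
    exact ⟨Nat.one_le_div_iff hp |>.mpr hpa, Nat.div_le_div_right h2⟩
  · intro j hj
    simp only [Finset.mem_Icc] at hj
    obtain ⟨h1, h2⟩ := hj
    simp only [Finset.mem_filter, Finset.mem_Icc]
    refine ⟨⟨Nat.mul_pos hp h1, ?_⟩, Dvd.intro j rfl⟩
    calc p * j = j * p := mul_comm _ _
      _ ≤ n := (Nat.le_div_iff_mul_le hp).mp h2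
  · intro a ha
    simp only [Finset.mem_filter] at ha
    exact Nat.mul_div_cancel' ha.2
  · intro j _
    exact Nat.mul_div_cancel_left j hp
  · intro a ha
    simp only [Finset.mem_filter, Finset.mem_Icc] at ha
    obtain ⟨⟨h1, _⟩, h3⟩ := ha
    conv_lhs => rw [← Nat.mul_div_cancel' h3]
    push_cast
    rw [mul_inv]

/-- The key valuation step: if `p ≤ n` and the valuation of `H_{n/p}` is nonpositive, then
the valuation of `H_n` equals that of `H_{n/p}` minus one. -/
private lemma harmonic_val_step {p n : ℕ} [Fact p.Prime] (hn : p ≤ n)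
    (hv : padicValRat p (harmonic (n / p)) ≤ 0) :
    padicValRat p (harmonic n) = padicValRat p (harmonic (n / p)) - 1 := by
  have hp : p.Prime := Fact.out
  have hp0 : 0 < p := hp.pos
  have hm1 : 1 ≤ n / p := (Nat.one_le_div_iff hp0).mpr hn
  have hmne : harmonic (n / p) ≠ 0 := (harmonic_pos (by omega)).ne'
  set F : ℕ → ℚ := fun i => if i = 0 then (p : ℚ)⁻¹ * harmonic (n / p) else (i : ℚ)⁻¹ with hF
  set S := (Finset.Icc 1 n).filter (fun i => ¬ p ∣ i) with hSdef
  have hpos : ∀ i, 0 < F i := by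
    intro i
    rcases Nat.eq_zero_or_pos i with rfl | hi
    · simp only [hF, if_pos rfl]
      exact mul_pos (by positivity) (harmonic_pos (by omega))
    · simp only [hF, if_neg hi.ne']
      positivity
  have hS1 : (1 : ℕ) ∈ S := by
    simp only [hSdef, Finset.mem_filter, Finset.mem_Icc]
    exact ⟨⟨le_refl 1, le_trans hp.two_le hn |>.trans' (by omega)⟩,
      fun hc => hp.ne_one (Nat.dvd_one.mp hc)⟩
  have hsum_eq : ∑ i ∈ S, F i = ∑ i ∈ S, (i : ℚ)⁻¹ := by
    refine Finset.sum_congr rfl fun i hi => ?_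
    simp only [hSdef, Finset.mem_filter, Finset.mem_Icc] at hi
    simp only [hF, if_neg (by omega : i ≠ 0)]
  have hdecomp : harmonic n = F 0 + ∑ i ∈ S, F i := by
    rw [hsum_eq]
    simp only [hF, if_pos rfl]
    exact harmonic_decomp hp0 n
  have hv0 : padicValRat p (F 0) = padicValRat p (harmonic (n / p)) - 1 := by
    simp only [hF, if_pos rfl]
    rw [padicValRat.mul (inv_ne_zero (by exact_mod_cast hp0.ne')) hmne,
      padicValRat.inv, padicValRat.self hp.one_lt]
    ring
  have hFi : ∀ i ∈ S, padicValRat p (F 0) < padicValRat p (F i) := by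
    intro i hi
    simp only [hSdef, Finset.mem_filter, Finset.mem_Icc] at hi
    obtain ⟨⟨h1, _⟩, h3⟩ := hi
    have : F i = (i : ℚ)⁻¹ := by simp only [hF, if_neg (by omega : i ≠ 0)]
    rw [this, hv0]
    have hvi : padicValRat p ((i : ℕ) : ℚ)⁻¹ = 0 := by
      rw [padicValRat.inv, padicValRat.of_nat, padicValNat.eq_zero_of_not_dvd h3]
      simp
    rw [hvi]
    omega
  have hlt : padicValRat p (F 0) < padicValRat p (∑ i ∈ S, F i) :=
    padicValRat.lt_sum_of_lt ⟨1, hS1⟩ hFi hpos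
  have hsumne : ∑ i ∈ S, F i ≠ 0 := (Finset.sum_pos (fun i _ => hpos i) ⟨1, hS1⟩).ne'
  have hne : F 0 + ∑ i ∈ S, F i ≠ 0 :=
    (add_pos (hpos 0) (Finset.sum_pos (fun i _ => hpos i) ⟨1, hS1⟩)).ne'
  rw [hdecomp, padicValRat.add_eq_of_lt hne (hpos 0).ne' hsumne hlt, hv0]

/-- If `p^k` fails to divide the denominator of `H_n`, then `n / p^k` is zero or `p` divides
the numerator of `H_{n/p^k}`. -/
private lemma harmonic_key {p : ℕ} [Fact p.Prime] :
    ∀ {k : ℕ}, 0 < k → ∀ {n : ℕ}, ¬ p ^ k ∣ (harmonic n).den →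
      n / p ^ k = 0 ∨ (p : ℤ) ∣ (harmonic (n / p ^ k)).num := by
  have hp : p.Prime := Fact.out
  intro k
  induction k with
  | zero => omega
  | succ k ih =>
    intro _ n hden
    have hdiv : n / p ^ (k + 1) = (n / p) / p ^ k := by
      rw [Nat.div_div_eq_div_mul, ← pow_succ']
    by_cases hm : n / p = 0
    · left
      rw [hdiv, hm, Nat.zero_div]
    · have hm1 : 1 ≤ n / p := Nat.pos_of_ne_zero hm
      have hnp : p ≤ n := by
        by_contra hc
        exact hm (Nat.div_eq_of_lt (by omega))
      have hn0 : harmonic n ≠ 0 := (harmonic_pos (by have := hp.pos; omega : n ≠ 0)).ne'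
      have hmne : harmonic (n / p) ≠ 0 := (harmonic_pos (by omega)).ne'
      rcases Nat.eq_zero_or_pos k with rfl | hk
      · -- base case k = 1
        right
        rw [hdiv, pow_zero, Nat.div_one]
        by_contra hc
        have hvm : padicValRat p (harmonic (n / p)) ≤ 0 := by
          by_contra h
          exact hc (harm_dvd_num_of_pos_val (lt_of_not_ge h))
        have hvn : padicValRat p (harmonic n) ≤ -(1 : ℤ) := by
          rw [harmonic_val_step hnp hvm]; omega
        exact hden ((harm_pow_dvd_den_iff (k := 1) hn0 one_pos).mpr (by exact_mod_cast hvn))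
      · -- inductive step
        have hdenm : ¬ p ^ k ∣ (harmonic (n / p)).den := by
          intro hc
          have hvm : padicValRat p (harmonic (n / p)) ≤ -(k : ℤ) :=
            (harm_pow_dvd_den_iff hmne hk).mp hc
          have hvm0 : padicValRat p (harmonic (n / p)) ≤ 0 := by omega
          have hvn : padicValRat p (harmonic n) ≤ -((k : ℤ) + 1) := by
            rw [harmonic_val_step hnp hvm0]; omega
          exact hden ((harm_pow_dvd_den_iff (k := k + 1) hn0 (by omega)).mpr
            (by push_cast; omega))
        rcases ih hk hdenm with h0 | hdvd
        · left; rw [hdiv]; exact h0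
        · right; rw [hdiv]; exact hdvd

/-- For any prime `p`, positive integer `k` and real `x > p^k`, the number of positive integers
`n ≤ x` with `p^k ∤ v_n` is at most `p^k * (J_p(x / p^k) + 1)`, where `J_p(y)` counts positive
integers `n ≤ y` with `p ∣ u_n`. -/
theorem count_not_dvd_harmonic_den_le_Jp (p : ℕ) (hp : p.Prime) (k : ℕ) (hk : 0 < k)
    (x : ℝ) (hx : (p : ℝ) ^ k < x) :
    (((Finset.Icc 1 ⌊x⌋₊).filter (fun n : ℕ => ¬ p ^ k ∣ (harmonic n).den)).card : ℝ) ≤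
      (p : ℝ) ^ k *
        ((((Finset.Icc 1 ⌊x / (p : ℝ) ^ k⌋₊).filter
            (fun n : ℕ => (p : ℤ) ∣ (harmonic n).num)).card : ℝ) + 1) := by
  haveI : Fact p.Prime := ⟨hp⟩
  set N := p ^ k with hN
  have hN0 : 0 < N := pow_pos hp.pos k
  set J := (Finset.Icc 1 ⌊x / (p : ℝ) ^ k⌋₊).filter
      (fun n : ℕ => (p : ℤ) ∣ (harmonic n).num) with hJ
  set t := insert 0 J with ht
  set s := (Finset.Icc 1 ⌊x⌋₊).filter (fun n : ℕ => ¬ p ^ k ∣ (harmonic n).den) with hs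
  have hmaps : ∀ n ∈ s, n / N ∈ t := by
    intro n hn
    simp only [hs, Finset.mem_filter, Finset.mem_Icc] at hn
    obtain ⟨⟨h1, h2⟩, hden⟩ := hn
    by_cases h0 : n / N = 0
    · rw [h0]; exact Finset.mem_insert_self _ _
    rcases harmonic_key hk hden with h0' | hdvd
    · exact absurd h0' h0
    refine Finset.mem_insert_of_mem (Finset.mem_filter.mpr ⟨Finset.mem_Icc.mpr
      ⟨Nat.pos_of_ne_zero h0, ?_⟩, hdvd⟩)
    have hfd : ⌊x / (p : ℝ) ^ k⌋₊ = ⌊x⌋₊ / N := by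
      have : ((N : ℕ) : ℝ) = (p : ℝ) ^ k := by push_cast [hN]; ring
      rw [← this, Nat.floor_div_natCast]
    rw [hfd]
    exact Nat.div_le_div_right h2
  have hfibers : ∀ m ∈ t, (s.filter (fun n => n / N = m)).card ≤ N := by
    intro m _
    have hsub : s.filter (fun n => n / N = m) ⊆ Finset.Ico (m * N) (m * N + N) := by
      intro n hn
      simp only [Finset.mem_filter] at hn
      obtain ⟨-, hq⟩ := hn
      rw [Finset.mem_Ico, ← hq]
      exact ⟨Nat.div_mul_le_self n N, Nat.lt_div_mul_add hN0⟩
    calc (s.filter (fun n => n / N = m)).card ≤ (Finset.Ico (m * N) (m * N + N)).card :=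
          Finset.card_le_card hsub
      _ = N := by rw [Nat.card_Ico]; omega
  have hcard : s.card ≤ N * t.card :=
    Finset.card_le_mul_card_image_of_maps_to hmaps N hfibers
  have htcard : t.card ≤ J.card + 1 := Finset.card_insert_le _ _
  have hfinal : s.card ≤ N * (J.card + 1) :=
    le_trans hcard (Nat.mul_le_mul_left N htcard)
  have : ((s.card : ℕ) : ℝ) ≤ ((N * (J.card + 1) : ℕ) : ℝ) := by exact_mod_cast hfinal
  calc (s.card : ℝ) ≤ ((N * (J.card + 1) : ℕ) : ℝ) := this
    _ = (p : ℝ) ^ k * ((J.card : ℝ) + 1) := by push_cast [hN]; ring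
end

section
/- The set of positive integers n such that 4 does not divide v_n is exactly {1, 2, 3}, and the set of positive integers n such that 2 does not divide v_n is exactly {1}; in particular, v_n is even for every integer n ≥ 2. -/
lemma harmonic_den_log_dvd (n : ℕ) : 2 ^ (Nat.log 2 n) ∣ (harmonic n).den := by
  rcases eq_or_ne n 0 with rfl | hn
  · simp
  have h := padicValRat_two_harmonic n
  unfold padicValRat at h
  have hden : ((harmonic n).den : ℕ) ≠ 0 := (harmonic n).den_nz
  haveI : Fact (Nat.Prime 2) := ⟨Nat.prime_two⟩
  rw [padicValNat_dvd_iff_le hden]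
  have hnum : 0 ≤ padicValInt 2 (harmonic n).num := by positivity
  omega

/-- The set of positive integers `n` with `4 ∤ v_n` is `{1, 2, 3}`, the set of positive
integers `n` with `2 ∤ v_n` is `{1}`; in particular `v_n` is even for every `n ≥ 2`. -/
theorem harmonic_den_not_dvd_sets :
    {n : ℕ | 0 < n ∧ ¬ (4 ∣ (harmonic n).den)} = {1, 2, 3} ∧
      {n : ℕ | 0 < n ∧ ¬ (2 ∣ (harmonic n).den)} = {1} ∧
      ∀ n : ℕ, 2 ≤ n → 2 ∣ (harmonic n).den := by
  have h2 : ∀ n : ℕ, 2 ≤ n → 2 ∣ (harmonic n).den := by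
    intro n hn
    have := harmonic_den_log_dvd n
    have hlog : 1 ≤ Nat.log 2 n := Nat.log_pos one_lt_two hn
    calc (2:ℕ) = 2 ^ 1 := (pow_one 2).symm
    _ ∣ 2 ^ (Nat.log 2 n) := pow_dvd_pow 2 hlog
    _ ∣ _ := this
  have h4 : ∀ n : ℕ, 4 ≤ n → 4 ∣ (harmonic n).den := by
    intro n hn
    have := harmonic_den_log_dvd n
    have hlog : 2 ≤ Nat.log 2 n := by
      have := Nat.log_mono_right (b := 2) hn
      simpa [Nat.log_eq_of_pow_le_of_lt_pow (by norm_num : 2^2 ≤ 4) (by norm_num : 4 < 2^3)] using this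
    calc (4:ℕ) = 2 ^ 2 := by norm_num
    _ ∣ 2 ^ (Nat.log 2 n) := pow_dvd_pow 2 hlog
    _ ∣ _ := this
  have e1 : (harmonic 1).den = 1 := by norm_num [harmonic_succ]
  have e2 : (harmonic 2).den = 2 := by
    norm_num [show (2:ℕ) = 1 + 1 from rfl, harmonic_succ]
  have e3 : (harmonic 3).den = 6 := by
    norm_num [show (3:ℕ) = 1 + 1 + 1 from rfl, harmonic_succ]
  refine ⟨?_, ?_, h2⟩
  · ext n
    simp only [Set.mem_setOf_eq, Set.mem_insert_iff, Set.mem_singleton_iff]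
    constructor
    · rintro ⟨hpos, hnd⟩
      by_contra hc
      push_neg at hc
      exact hnd (h4 n (by omega))
    · rintro (rfl | rfl | rfl)
      · exact ⟨one_pos, by rw [e1]; decide⟩
      · exact ⟨by norm_num, by rw [e2]; decide⟩
      · exact ⟨by norm_num, by rw [e3]; decide⟩
  · ext n
    simp only [Set.mem_setOf_eq, Set.mem_singleton_iff]
    constructor
    · rintro ⟨hpos, hnd⟩
      by_contra hc
      exact hnd (h2 n (by omega))
    · rintro rfl
      exact ⟨one_pos, by rw [e1]; decide⟩
end
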